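/- Let q > 1 and suppose ρ is a C² positive 2π-periodic admissible radius function with (ln ρ)'' < √q/(1+√q) everywhere. Fix η ∈ 𝕊¹ with angle θ_η, and let θ₁ be the solution of (ln ρ)'(θ) = h(θ − θ_η) with θ₁ − θ_η ∈ (θ_q − π, π − θ_q), and θ₂ be the solution of (ln ρ)'(θ) = h_π(θ − θ_η) with θ₂ − θ_η ∈ (−θ_q, θ_q), where h(s) = √q sin s/(√q cos s + 1), h_π(s) = h(s − π), θ_q = arccos(1/√q). If (ln ρ)'(θ₂) > 0, then 0 < θ₂ − θ_η < θ₁ − θ_η < π − θ_q, (ln ρ)'(θ₁) > 0, 0 < sin(θ₂ − θ_η) < sin(θ₁ − θ_η), and ρ(θ₂) < ρ(θ₁). -/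

import Mathlib

open Real

set_option maxHeartbeats 1000000 in
theorem stmt_18 (q : ℝ) (hq : 1 < q) (ρ : ℝ → ℝ)
    (hC2 : ContDiff ℝ 2 ρ) (hpos : ∀ t, 0 < ρ t)
    (hper : ∀ t, ρ (t + 2 * π) = ρ t)
    (hadm : ∀ t, deriv (deriv (fun s => Real.log (ρ s))) t < Real.sqrt q / (1 + Real.sqrt q))
    (θη θ₁ θ₂ : ℝ)
    (hθ₁mem : θ₁ - θη ∈ Set.Ioo (Real.arccos (1 / Real.sqrt q) - π)
      (π - Real.arccos (1 / Real.sqrt q)))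
    (hθ₁eq : deriv (fun s => Real.log (ρ s)) θ₁ =
      Real.sqrt q * Real.sin (θ₁ - θη) / (Real.sqrt q * Real.cos (θ₁ - θη) + 1))
    (hθ₂mem : θ₂ - θη ∈ Set.Ioo (-Real.arccos (1 / Real.sqrt q))
      (Real.arccos (1 / Real.sqrt q)))
    (hθ₂eq : deriv (fun s => Real.log (ρ s)) θ₂ =
      Real.sqrt q * Real.sin (θ₂ - θη - π) / (Real.sqrt q * Real.cos (θ₂ - θη - π) + 1))
    (hpos2 : 0 < deriv (fun s => Real.log (ρ s)) θ₂) :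
    0 < θ₂ - θη ∧ θ₂ - θη < θ₁ - θη ∧ θ₁ - θη < π - Real.arccos (1 / Real.sqrt q) ∧
    0 < deriv (fun s => Real.log (ρ s)) θ₁ ∧
    0 < Real.sin (θ₂ - θη) ∧ Real.sin (θ₂ - θη) < Real.sin (θ₁ - θη) ∧
    ρ θ₂ < ρ θ₁ := by
  set r := Real.sqrt q with hrdef
  have hr1 : 1 < r := by
    rw [hrdef, show (1:ℝ) = Real.sqrt 1 by simp]
    exact Real.sqrt_lt_sqrt (by norm_num) hq
  have hr0 : 0 < r := lt_trans one_pos hr1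
  set θq := Real.arccos (1 / r) with hθqdef
  have hx0 : (0:ℝ) < 1 / r := by positivity
  have hx1 : 1 / r < 1 := by rw [div_lt_one hr0]; exact hr1
  have hcosθq : Real.cos θq = 1 / r := Real.cos_arccos (by linarith) (by linarith)
  have hθq0 : 0 < θq := Real.arccos_pos.mpr hx1
  have hθqlt : θq < π / 2 := Real.arccos_lt_pi_div_two.mpr hx0
  have hπ : 0 < π := Real.pi_pos
  set L := fun s => Real.log (ρ s) with hLdef
  set g := deriv L with hgdef
  have hL : ContDiff ℝ 2 L := hC2.log fun t => (hpos t).ne'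
  have hgC1 : ContDiff ℝ 1 g := by
    have h2 : ContDiff ℝ ((1:ℕ)+1) L := by exact_mod_cast hL
    exact ((contDiff_succ_iff_deriv).mp h2).2.2
  have hgdiff : Differentiable ℝ g := hgC1.differentiable one_ne_zero
  obtain ⟨hs₁l, hs₁r⟩ := hθ₁mem
  obtain ⟨hs₂l, hs₂r⟩ := hθ₂mem
  -- denominator positivity on the large interval
  have hcosbig : ∀ s : ℝ, θq - π < s → s < π - θq → -(1/r) < Real.cos s := by
    intro s h1 h2
    have habs : |s| < π - θq := abs_lt.mpr ⟨by linarith, h2⟩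
    have : Real.cos (π - θq) < Real.cos |s| :=
      Real.cos_lt_cos_of_nonneg_of_le_pi (abs_nonneg s) (by linarith) habs
    rw [Real.cos_pi_sub, hcosθq, Real.cos_abs] at this
    linarith
  have hdenpos : ∀ s : ℝ, θq - π < s → s < π - θq → 0 < r * Real.cos s + 1 := by
    intro s h1 h2
    have := hcosbig s h1 h2
    have h3 : r * (-(1/r)) < r * Real.cos s := by
      exact (mul_lt_mul_iff_right₀ hr0).mpr this
    rw [mul_neg, mul_one_div, div_self hr0.ne'] at h3
    linarith
  -- the comparison function F and its strict antitonicity on S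
  set S : Set ℝ := Set.Ioo (θη + (θq - π)) (θη + (π - θq)) with hSdef
  set F : ℝ → ℝ := fun θ => g θ - r * Real.sin (θ - θη) / (r * Real.cos (θ - θη) + 1)
    with hFdef
  have hFderiv : ∀ θ ∈ S, HasDerivAt F
      (deriv g θ - (r^2 + r * Real.cos (θ - θη)) / (r * Real.cos (θ - θη) + 1)^2) θ := by
    intro θ hθ
    obtain ⟨h1, h2⟩ := hθ
    have hden : 0 < r * Real.cos (θ - θη) + 1 := hdenpos _ (by linarith) (by linarith)
    have hid : HasDerivAt (fun θ : ℝ => θ - θη) 1 θ := (hasDerivAt_id θ).sub_const θη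
    have hnum : HasDerivAt (fun θ : ℝ => r * Real.sin (θ - θη))
        (r * (Real.cos (θ - θη) * 1)) θ := (hid.sin).const_mul r
    have hdenD : HasDerivAt (fun θ : ℝ => r * Real.cos (θ - θη) + 1)
        (r * (-Real.sin (θ - θη) * 1)) θ := ((hid.cos).const_mul r).add_const 1
    have hgD : HasDerivAt g (deriv g θ) θ := (hgdiff θ).hasDerivAt
    have hdiv := hnum.div hdenD hden.ne'
    have := hgD.sub hdiv
    convert this using 1
    have hc := Real.sin_sq_add_cos_sq (θ - θη)
    case e'_4 => rfl
    case e'_5 => rfl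
    case e'_8 => rfl
    field_simp
    ring_nf
    nlinarith [Real.sin_sq_add_cos_sq (θ - θη)]
  have hFnegderiv : ∀ θ ∈ S, deriv F θ < 0 := by
    intro θ hθ
    rw [(hFderiv θ hθ).deriv]
    obtain ⟨h1, h2⟩ := hθ
    have hden : 0 < r * Real.cos (θ - θη) + 1 := hdenpos _ (by linarith) (by linarith)
    have hcb : -(1/r) < Real.cos (θ - θη) := hcosbig _ (by linarith) (by linarith)
    have hc1 : Real.cos (θ - θη) ≤ 1 := Real.cos_le_one _
    have hadm' : deriv g θ < r / (1 + r) := hadm θ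
    have hkey : r / (1 + r) ≤ (r^2 + r * Real.cos (θ - θη)) / (r * Real.cos (θ - θη) + 1)^2 := by
      rw [div_le_div_iff₀ (by linarith) (by positivity)]
      set c := Real.cos (θ - θη) with hcdef
      have hr2 : r^2 * (-(1/r)) < r^2 * c := by
        exact mul_lt_mul_of_pos_left hcb (by positivity)
      have hr3 : r^2 * (1/r) = r := by field_simp
      have hfac : (0:ℝ) ≤ r^2 * c + r^2 + r - 1 := by nlinarith
      have hnn : (0:ℝ) ≤ r * (1 - c) * (r^2 * c + r^2 + r - 1) :=
        mul_nonneg (mul_nonneg hr0.le (by linarith)) hfac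
      linarith [hnn]
    linarith
  have hFcont : ContinuousOn F S := fun θ hθ =>
    ((hFderiv θ hθ).differentiableAt.continuousAt).continuousWithinAt
  have hFanti : StrictAntiOn F S :=
    strictAntiOn_of_deriv_neg (convex_Ioo _ _) hFcont (by rwa [interior_Ioo])
  have hθ₁S : θ₁ ∈ S := Set.mem_Ioo.mpr ⟨by linarith, by linarith⟩
  have hθ₂S : θ₂ ∈ S := Set.mem_Ioo.mpr ⟨by linarith, by linarith⟩
  -- facts at θ₂
  have hcos₂ : 1 / r < Real.cos (θ₂ - θη) := by
    rcases eq_or_ne (θ₂ - θη) 0 with h | h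
    · rw [h, Real.cos_zero]; linarith
    · have habs : |θ₂ - θη| < θq := abs_lt.mpr ⟨by linarith, hs₂r⟩
      have h0 : 0 ≤ |θ₂ - θη| := abs_nonneg _
      have := Real.cos_lt_cos_of_nonneg_of_le_pi h0 (by linarith) habs
      rw [hcosθq, Real.cos_abs] at this
      linarith
  have hden₂ : 0 < r * Real.cos (θ₂ - θη) - 1 := by
    have : r * (1/r) < r * Real.cos (θ₂ - θη) := (mul_lt_mul_iff_right₀ hr0).mpr hcos₂
    rw [mul_one_div, div_self hr0.ne'] at this
    linarith
  have hg2 : g θ₂ = r * Real.sin (θ₂ - θη) / (r * Real.cos (θ₂ - θη) - 1) := by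
    rw [hθ₂eq, Real.sin_sub_pi, Real.cos_sub_pi,
      show r * -Real.sin (θ₂ - θη) = -(r * Real.sin (θ₂ - θη)) by ring,
      show r * -Real.cos (θ₂ - θη) + 1 = -(r * Real.cos (θ₂ - θη) - 1) by ring,
      neg_div_neg_eq]
  have hsin₂pos : 0 < Real.sin (θ₂ - θη) := by
    have hp2 : 0 < g θ₂ := hpos2
    rw [hg2] at hp2
    have hA : 0 < r * Real.sin (θ₂ - θη) := by
      have := mul_pos hp2 hden₂
      rwa [div_mul_cancel₀ _ hden₂.ne'] at this
    nlinarith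
  have hs₂pos : 0 < θ₂ - θη := by
    by_contra h
    push_neg at h
    have : Real.sin (-(θ₂ - θη)) ≥ 0 :=
      Real.sin_nonneg_of_nonneg_of_le_pi (by linarith) (by linarith)
    rw [Real.sin_neg] at this
    linarith
  -- F θ₁ = 0, F θ₂ > 0
  have hF1 : F θ₁ = 0 := by
    simp only [hFdef]
    rw [hθ₁eq]; ring
  have hF2 : 0 < F θ₂ := by
    have hden₂' : 0 < r * Real.cos (θ₂ - θη) + 1 := by linarith
    have hA : 0 < r * Real.sin (θ₂ - θη) := by positivity
    have : r * Real.sin (θ₂ - θη) / (r * Real.cos (θ₂ - θη) + 1)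
        < r * Real.sin (θ₂ - θη) / (r * Real.cos (θ₂ - θη) - 1) :=
      div_lt_div_of_pos_left hA hden₂ (by linarith)
    simp only [hFdef]
    rw [hg2]
    linarith
  have hlt : θ₂ < θ₁ := by
    rcases lt_trichotomy θ₂ θ₁ with h | h | h
    · exact h
    · exfalso; rw [h, hF1] at hF2; exact lt_irrefl 0 hF2
    · exfalso
      have := hFanti hθ₁S hθ₂S h
      rw [hF1] at this
      linarith
  -- g θ₁ > 0
  have hsin₁pos : 0 < Real.sin (θ₁ - θη) :=
    Real.sin_pos_of_pos_of_lt_pi (by linarith) (by linarith)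
  have hden₁ : 0 < r * Real.cos (θ₁ - θη) + 1 := hdenpos _ hs₁l hs₁r
  have hg1pos : 0 < g θ₁ := by
    rw [hθ₁eq]
    positivity
  -- sin comparison
  have hsinlt : Real.sin (θ₂ - θη) < Real.sin (θ₁ - θη) := by
    rcases le_or_gt (θ₁ - θη) (π / 2) with h | h
    · exact Real.strictMonoOn_sin ⟨by linarith, by linarith⟩ ⟨by linarith, h⟩ (by linarith)
    · rw [show θ₁ - θη = π - (π - (θ₁ - θη)) by ring, Real.sin_pi_sub]
      exact Real.strictMonoOn_sin ⟨by linarith, by linarith⟩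
        ⟨by linarith, by linarith⟩ (by linarith)
  -- ρ θ₂ < ρ θ₁
  have hmono : StrictMonoOn L (Set.Icc θ₂ θ₁) := by
    apply strictMonoOn_of_deriv_pos (convex_Icc _ _)
      ((hL.continuous).continuousOn)
    intro θ hθ
    rw [interior_Icc] at hθ
    obtain ⟨h1, h2⟩ := hθ
    have hθS : θ ∈ S := ⟨by rcases hθ₂S with ⟨a, b⟩; linarith,
      by rcases hθ₁S with ⟨a, b⟩; linarith⟩
    have hFgt : 0 < F θ := by
      have := hFanti hθS hθ₁S h2
      rwa [hF1] at this
    have hsθ : 0 < Real.sin (θ - θη) :=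
      Real.sin_pos_of_pos_of_lt_pi (by linarith) (by rcases hθS with ⟨a, b⟩; linarith)
    have hdθ : 0 < r * Real.cos (θ - θη) + 1 :=
      hdenpos _ (by rcases hθS with ⟨a, b⟩; linarith) (by rcases hθS with ⟨a, b⟩; linarith)
    have hh : 0 ≤ r * Real.sin (θ - θη) / (r * Real.cos (θ - θη) + 1) := by positivity
    simp only [hFdef] at hFgt
    show 0 < g θ
    linarith
  have hLlt : L θ₂ < L θ₁ := hmono ⟨le_refl _, hlt.le⟩ ⟨hlt.le, le_refl _⟩ hlt
  have hρlt : ρ θ₂ < ρ θ₁ := by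
    simp only [hLdef] at hLlt
    exact (Real.log_lt_log_iff (hpos θ₂) (hpos θ₁)).mp hLlt
  exact ⟨hs₂pos, by linarith, hs₁r, hg1pos, hsin₂pos, hsinlt, hρlt⟩
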